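/- Consider AMSGrad under the assumptions of the constant-step theorem but with general positive step sizes: losses ℓ_t : ℝ^d → ℝ convex differentiable with gradients g_t = ∇ℓ_t(w_t), |g_{t,i}| ≤ G and |w_{t,i} − w*_i| ≤ D for all t ≤ T and i ≤ d, first-moment parameters β_{1,t} = β_1/√t with β_1 ∈ (0,1), constant β_2 ∈ (0,1) with β_1² < β_2, updates m_{t,i} = β_{1,t} m_{t-1,i} + (1−β_{1,t}) g_{t,i} (m_0 = 0), v_{t,i} = (1−β_2) Σ_{s=1}^t β_2^{t−s} g_{s,i}², v̂_{t,i} = max_{s≤t} v_{s,i} > 0, w_{t+1,i} = w_{t,i} − γ_t m_{t,i}/√(v̂_{t,i}) with γ_t = α_t/(1 − ∏_{s=1}^t β_{1,s}) for positive α_t, and suppose √(v̂_{t,i})/α_t is non-decreasing in t for each i. Then Σ_{t=1}^T (ℓ_t(w_t) − ℓ_t(w*)) ≤ d D² G / (2 α_T (1−β_1)) + 2 d D G β_1 √T / (1−β_1) + Σ_{t=1}^T γ_t · d G C(β_1,β_2) / (2(1−β_1)), where C(β_1,β_2) = β_2/((1−β_2)(β_2 − β_1²)). -/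

import Mathlib

lemma convex_grad_ineq {d : ℕ} (f : EuclideanSpace ℝ (Fin d) → ℝ) (x y grad : EuclideanSpace ℝ (Fin d))
    (hc : ConvexOn ℝ Set.univ f) (hg : HasGradientAt f grad x) :
    f x - f y ≤ ∑ i, grad i * (x i - y i) := by
  have hφc : ConvexOn ℝ Set.univ (f ∘ (AffineMap.lineMap x y : ℝ →ᵃ[ℝ] _)) := by
    have := hc.comp_affineMap (AffineMap.lineMap x y : ℝ →ᵃ[ℝ] _)
    simpa using this
  have hline : HasDerivAt (fun s : ℝ => AffineMap.lineMap x y s) (y - x) 0 := by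
    simp only [AffineMap.lineMap_apply_module]
    have h := ((hasDerivAt_id (0:ℝ)).smul_const (y - x)).add_const x
    have he : (fun s : ℝ => (1 - s) • x + s • y) = fun s : ℝ => id s • (y - x) + x := by
      funext s; simp [id]; module
    rw [he]; simpa using h
  have hφd : HasDerivAt (f ∘ (AffineMap.lineMap x y : ℝ →ᵃ[ℝ] _)) (inner ℝ grad (y - x)) 0 := by
    have hF : HasFDerivAt f (InnerProductSpace.toDual ℝ _ grad : _ →L[ℝ] ℝ) x := hg
    have hF' : HasFDerivAt f (InnerProductSpace.toDual ℝ _ grad : _ →L[ℝ] ℝ)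
        ((AffineMap.lineMap x y : ℝ →ᵃ[ℝ] _) 0) := by simpa using hF
    have := hF'.comp_hasDerivAt (x := (0:ℝ)) hline
    simpa [real_inner_comm] using this
  have hle := hφc.le_slope_of_hasDerivAt (Set.mem_univ (0:ℝ)) (Set.mem_univ (1:ℝ)) one_pos hφd
  have hslope : slope (f ∘ (AffineMap.lineMap x y : ℝ →ᵃ[ℝ] _)) 0 1 = f y - f x := by
    simp [slope_def_field, Function.comp]
  rw [hslope] at hle
  have hinner : (inner ℝ grad (y - x)) = ∑ i, grad i * (y i - x i) := by
    rw [PiLp.inner_apply]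
    refine Finset.sum_congr rfl fun i _ => ?_
    simp [RCLike.inner_apply, PiLp.sub_apply, mul_comm]
  have h2 : ∑ i, grad i * (x i - y i) = -∑ i, grad i * (y i - x i) := by
    rw [← Finset.sum_neg_distrib]; congr 1; ext i; ring
  rw [h2, ← hinner]; linarith

lemma abel_bound (T : ℕ) (hT : 1 ≤ T) (y z a : ℕ → ℝ) (D2 : ℝ)
    (hy0 : ∀ t, 1 ≤ t → t ≤ T → 0 ≤ y t)
    (hyz : ∀ t, 1 ≤ t → t ≤ T → y t ≤ z t)
    (ha0 : ∀ t, 1 ≤ t → t ≤ T + 1 → 0 ≤ a t)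
    (haD : ∀ t, 1 ≤ t → t ≤ T → a t ≤ D2)
    (hinc : ∀ t, 2 ≤ t → t ≤ T → y t - y (t - 1) ≤ z t - z (t - 1))
    (hz : ∀ t, 2 ≤ t → t ≤ T → z (t - 1) ≤ z t) :
    ∑ t ∈ Finset.Icc 1 T, y t * (a t - a (t + 1)) ≤ z T * D2 - y T * a (T + 1) := by
  induction T, hT using Nat.le_induction with
  | base =>
    simp only [Finset.Icc_self, Finset.sum_singleton]
    have h1 := hy0 1 le_rfl le_rfl
    have h2 := hyz 1 le_rfl le_rfl
    have h3 := haD 1 le_rfl le_rfl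
    have h4 := ha0 1 le_rfl (by omega)
    nlinarith
  | succ n hn ih =>
    rw [Finset.sum_Icc_succ_top (by omega : 1 ≤ n + 1)]
    have IH := ih (fun t h1 h2 => hy0 t h1 (by omega)) (fun t h1 h2 => hyz t h1 (by omega))
      (fun t h1 h2 => ha0 t h1 (by omega)) (fun t h1 h2 => haD t h1 (by omega))
      (fun t h1 h2 => hinc t h1 (by omega)) (fun t h1 h2 => hz t h1 (by omega))
    have hinc' : y (n + 1) - y n ≤ z (n + 1) - z n := by
      have := hinc (n + 1) (by omega) le_rfl; simpa using this
    have hz' : z n ≤ z (n + 1) := by have := hz (n + 1) (by omega) le_rfl; simpa using this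
    have haD' : a (n + 1) ≤ D2 := haD (n + 1) (by omega) le_rfl
    have ha0' : 0 ≤ a (n + 1) := ha0 (n + 1) (by omega) (by omega)
    have ha0'' : 0 ≤ a (n + 2) := ha0 (n + 2) (by omega) (by omega)
    have hy' : 0 ≤ y (n + 1) := hy0 (n + 1) (by omega) le_rfl
    have key : y (n + 1) * a (n + 1) - y n * a (n + 1) ≤ (z (n + 1) - z n) * D2 := by
      rcases le_or_gt (y n) (y (n + 1)) with h | h
      · nlinarith
      · nlinarith
    nlinarith [IH]

lemma sum_inv_sqrt_le (T : ℕ) : ∑ t ∈ Finset.Icc 1 T, 1 / Real.sqrt t ≤ 2 * Real.sqrt T := by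
  induction T with
  | zero => simp
  | succ n ih =>
    rw [Finset.sum_Icc_succ_top (by omega : 1 ≤ n + 1)]
    have h1 : (0:ℝ) < Real.sqrt (n + 1) := Real.sqrt_pos.2 (by positivity)
    have h2 : Real.sqrt n ^ 2 = n := Real.sq_sqrt (by positivity)
    have h3 : Real.sqrt (n + 1) ^ 2 = (n:ℝ) + 1 := by
      rw [Real.sq_sqrt (by positivity)]
    have h4 : (0:ℝ) ≤ Real.sqrt n := Real.sqrt_nonneg _
    have key : 1 / Real.sqrt (n + 1) ≤ 2 * Real.sqrt (n + 1) - 2 * Real.sqrt n := by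
      rw [div_le_iff₀ h1]
      nlinarith [sq_nonneg (Real.sqrt (n+1) - Real.sqrt n)]
    push_cast
    push_cast at ih
    linarith

lemma geom_aux (β2 : ℝ) (h0 : 0 ≤ β2) (s : ℕ) :
    (1 - β2) * ∑ r ∈ Finset.Icc 1 s, β2 ^ (s - r) ≤ 1 := by
  induction s with
  | zero => simp
  | succ n ih =>
    rw [Finset.sum_Icc_succ_top (by omega : 1 ≤ n + 1)]
    have hsplit : ∑ r ∈ Finset.Icc 1 n, β2 ^ (n + 1 - r) = β2 * ∑ r ∈ Finset.Icc 1 n, β2 ^ (n - r) := by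
      rw [Finset.mul_sum]
      refine Finset.sum_congr rfl fun r hr => ?_
      rw [Finset.mem_Icc] at hr
      rw [show n + 1 - r = (n - r) + 1 by omega, pow_succ]
      ring
    have hnn : (0:ℝ) ≤ ∑ r ∈ Finset.Icc 1 n, β2 ^ (n - r) := by positivity
    rw [hsplit]
    simp only [Nat.sub_self, pow_zero]
    nlinarith

set_option maxHeartbeats 4000000 in
theorem stmt17 {d : ℕ} (T : ℕ) (hT : 1 ≤ T)
    (ℓ : ℕ → EuclideanSpace ℝ (Fin d) → ℝ)
    (w g m : ℕ → EuclideanSpace ℝ (Fin d))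
    (v vhat : ℕ → Fin d → ℝ)
    (wstar : EuclideanSpace ℝ (Fin d))
    (β1 β2 D G : ℝ) (α : ℕ → ℝ)
    (hβ1 : β1 ∈ Set.Ioo (0 : ℝ) 1) (hβ2 : β2 ∈ Set.Ioo (0 : ℝ) 1)
    (hβ12 : β1 ^ 2 < β2) (hα : ∀ t, 1 ≤ t → t ≤ T → 0 < α t)
    (hconv : ∀ t, 1 ≤ t → t ≤ T → ConvexOn ℝ Set.univ (ℓ t))
    (hgrad : ∀ t, 1 ≤ t → t ≤ T → HasGradientAt (ℓ t) (g t) (w t))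
    (hm0 : m 0 = 0)
    (hm : ∀ t, 1 ≤ t → t ≤ T → ∀ i,
      m t i = (β1 / Real.sqrt t) * m (t - 1) i + (1 - β1 / Real.sqrt t) * g t i)
    (hv : ∀ t, 1 ≤ t → t ≤ T → ∀ i,
      v t i = (1 - β2) * ∑ s ∈ Finset.Icc 1 t, β2 ^ (t - s) * g s i ^ 2)
    (hvhat : ∀ t, 1 ≤ t → t ≤ T → ∀ i,
      IsGreatest {x : ℝ | ∃ s, 1 ≤ s ∧ s ≤ t ∧ x = v s i} (vhat t i))
    (hvpos : ∀ t, 1 ≤ t → t ≤ T → ∀ i, 0 < vhat t i)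
    (hupd : ∀ t, 1 ≤ t → t ≤ T → ∀ i,
      w (t + 1) i = w t i -
        (α t / (1 - ∏ s ∈ Finset.Icc 1 t, (β1 / Real.sqrt s))) * m t i /
          Real.sqrt (vhat t i))
    (hD : ∀ t, 1 ≤ t → t ≤ T → ∀ i, |w t i - wstar i| ≤ D)
    (hG : ∀ t, 1 ≤ t → t ≤ T → ∀ i, |g t i| ≤ G)
    (hvmono : ∀ i, ∀ s t, 1 ≤ s → s ≤ t → t ≤ T →
      Real.sqrt (vhat s i) / α s ≤ Real.sqrt (vhat t i) / α t) :
    ∑ t ∈ Finset.Icc 1 T, (ℓ t (w t) - ℓ t wstar) ≤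
      d * D ^ 2 * G / (2 * α T * (1 - β1)) +
      2 * d * D * G * β1 * Real.sqrt T / (1 - β1) +
      (∑ t ∈ Finset.Icc 1 T,
          α t / (1 - ∏ s ∈ Finset.Icc 1 t, (β1 / Real.sqrt s))) *
        (d * G * (β2 / ((1 - β2) * (β2 - β1 ^ 2))) / (2 * (1 - β1))) := by
  obtain ⟨hβ1p, hβ1l⟩ := hβ1
  obtain ⟨hβ2p, hβ2l⟩ := hβ2
  have h1β : (0:ℝ) < 1 - β1 := by linarith
  -- degenerate dimension
  rcases Nat.eq_zero_or_pos d with hd0 | hdpos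
  · subst hd0
    have hws : ∀ t, w t = wstar := fun t => Subsingleton.elim _ _
    have hL : ∑ t ∈ Finset.Icc 1 T, (ℓ t (w t) - ℓ t wstar) = 0 := by
      refine Finset.sum_eq_zero fun t _ => ?_
      rw [hws t]; ring
    rw [hL]
    simp
  -- main case
  set i0 : Fin d := ⟨0, hdpos⟩ with hi0
  have hG0 : 0 ≤ G := le_trans (abs_nonneg _) (hG 1 le_rfl hT i0)
  have hD0 : 0 ≤ D := le_trans (abs_nonneg _) (hD 1 le_rfl hT i0)
  -- basic: sqrt of naturals
  have hsq1 : ∀ t : ℕ, 1 ≤ t → 1 ≤ Real.sqrt t := by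
    intro t ht
    rw [show (1:ℝ) = Real.sqrt 1 by simp]
    exact Real.sqrt_le_sqrt (by exact_mod_cast ht)
  have hsqpos : ∀ t : ℕ, 1 ≤ t → 0 < Real.sqrt t := fun t ht => lt_of_lt_of_le one_pos (hsq1 t ht)
  -- b t := β1 / sqrt t facts
  have hbpos : ∀ t : ℕ, 1 ≤ t → 0 < β1 / Real.sqrt t := fun t ht => div_pos hβ1p (hsqpos t ht)
  have hble : ∀ t : ℕ, 1 ≤ t → β1 / Real.sqrt t ≤ β1 := fun t ht =>
    div_le_self hβ1p.le (hsq1 t ht)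
  have hblt1 : ∀ t : ℕ, 1 ≤ t → β1 / Real.sqrt t < 1 := fun t ht =>
    lt_of_le_of_lt (hble t ht) hβ1l
  have hbanti : ∀ t : ℕ, 2 ≤ t → β1 / Real.sqrt t ≤ β1 / Real.sqrt ((t - 1 : ℕ) : ℝ) := by
    intro t ht
    apply div_le_div_of_nonneg_left hβ1p.le (hsqpos (t-1) (by omega))
    exact Real.sqrt_le_sqrt (by exact_mod_cast Nat.sub_le t 1)
  -- P t := ∏ facts
  have hPpos : ∀ t : ℕ, 0 < ∏ s ∈ Finset.Icc 1 t, (β1 / Real.sqrt s) := by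
    intro t
    apply Finset.prod_pos
    intro s hs
    exact hbpos s (Finset.mem_Icc.1 hs).1
  have hPle : ∀ t : ℕ, 1 ≤ t → ∏ s ∈ Finset.Icc 1 t, (β1 / Real.sqrt s) ≤ β1 := by
    intro t ht
    calc ∏ s ∈ Finset.Icc 1 t, (β1 / Real.sqrt s) ≤ ∏ s ∈ Finset.Icc 1 t, β1 := by
          apply Finset.prod_le_prod
          · intro s hs; exact (hbpos s (Finset.mem_Icc.1 hs).1).le
          · intro s hs; exact hble s (Finset.mem_Icc.1 hs).1
      _ = β1 ^ t := by rw [Finset.prod_const, Nat.card_Icc]; norm_num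
      _ ≤ β1 ^ 1 := pow_le_pow_of_le_one hβ1p.le hβ1l.le ht
      _ = β1 := pow_one β1
  have hPanti : ∀ t : ℕ, 2 ≤ t →
      ∏ s ∈ Finset.Icc 1 t, (β1 / Real.sqrt s) ≤ ∏ s ∈ Finset.Icc 1 (t-1), (β1 / Real.sqrt s) := by
    intro t ht
    obtain ⟨n, rfl⟩ : ∃ n, t = n + 2 := ⟨t - 2, by omega⟩
    rw [show n + 2 - 1 = n + 1 by omega, show n + 2 = (n + 1) + 1 by omega,
      Finset.prod_Icc_succ_top (by omega : 1 ≤ n + 1 + 1)]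
    have h1 := hPpos (n + 1)
    have h2 := (hblt1 (n + 1 + 1) (by omega)).le
    nlinarith
  have h1Ppos : ∀ t : ℕ, 1 ≤ t → 1 - β1 ≤ 1 - ∏ s ∈ Finset.Icc 1 t, (β1 / Real.sqrt s) := by
    intro t ht; linarith [hPle t ht]
  have hγpos : ∀ t : ℕ, 1 ≤ t → t ≤ T →
      0 < α t / (1 - ∏ s ∈ Finset.Icc 1 t, (β1 / Real.sqrt s)) := by
    intro t h1 h2
    exact div_pos (hα t h1 h2) (by linarith [h1Ppos t h1])
  have hγge : ∀ t : ℕ, 1 ≤ t → t ≤ T →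
      α t ≤ α t / (1 - ∏ s ∈ Finset.Icc 1 t, (β1 / Real.sqrt s)) := by
    intro t h1 h2
    rw [le_div_iff₀ (by linarith [h1Ppos t h1])]
    nlinarith [hα t h1 h2, hPpos t]
  -- |m t i| ≤ G
  have hmG : ∀ t : ℕ, t ≤ T → ∀ i, |m t i| ≤ G := by
    intro t
    induction t with
    | zero => intro _ i; rw [hm0]; simpa using hG0
    | succ n ihn =>
      intro hle i
      rw [hm (n + 1) (by omega) hle i]
      have hb1 : 0 < β1 / Real.sqrt (n + 1 : ℕ) := hbpos (n + 1) (by omega)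
      have hb2 : β1 / Real.sqrt (n + 1 : ℕ) < 1 := hblt1 (n + 1) (by omega)
      have h3 : |m ((n + 1) - 1) i| ≤ G := by
        rw [show (n + 1) - 1 = n by omega]; exact ihn (by omega) i
      have h4 : |g (n + 1) i| ≤ G := hG (n + 1) (by omega) hle i
      calc |β1 / Real.sqrt (n + 1 : ℕ) * m ((n + 1) - 1) i +
              (1 - β1 / Real.sqrt (n + 1 : ℕ)) * g (n + 1) i|
          ≤ |β1 / Real.sqrt (n + 1 : ℕ) * m ((n + 1) - 1) i| +
              |(1 - β1 / Real.sqrt (n + 1 : ℕ)) * g (n + 1) i| := abs_add_le _ _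
        _ = β1 / Real.sqrt (n + 1 : ℕ) * |m ((n + 1) - 1) i| +
              (1 - β1 / Real.sqrt (n + 1 : ℕ)) * |g (n + 1) i| := by
              have hsub : (0:ℝ) < 1 - β1 / Real.sqrt ((n + 1 : ℕ) : ℝ) := by linarith
              rw [abs_mul, abs_mul, abs_of_pos hb1, abs_of_pos hsub]
        _ ≤ β1 / Real.sqrt (n + 1 : ℕ) * G + (1 - β1 / Real.sqrt (n + 1 : ℕ)) * G := by
              have := mul_le_mul_of_nonneg_left h3 hb1.le
              have := mul_le_mul_of_nonneg_left h4 (by linarith : (0:ℝ) ≤ 1 - β1 / Real.sqrt (n + 1 : ℕ))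
              linarith
        _ = G := by ring
  -- v nonneg and recursion
  have hvnn : ∀ t : ℕ, 1 ≤ t → t ≤ T → ∀ i, 0 ≤ v t i := by
    intro t h1 h2 i
    rw [hv t h1 h2 i]
    have : (0:ℝ) ≤ ∑ s ∈ Finset.Icc 1 t, β2 ^ (t - s) * g s i ^ 2 := by positivity
    nlinarith
  have hvrec : ∀ t : ℕ, 2 ≤ t → t ≤ T → ∀ i,
      v t i = β2 * v (t - 1) i + (1 - β2) * g t i ^ 2 := by
    intro t ht hle i
    obtain ⟨n, rfl⟩ : ∃ n, t = n + 2 := ⟨t - 2, by omega⟩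
    rw [hv (n + 2) (by omega) hle i, show (n + 2) - 1 = n + 1 by omega,
      hv (n + 1) (by omega) (by omega) i,
      show n + 2 = (n + 1) + 1 by omega,
      Finset.sum_Icc_succ_top (by omega : 1 ≤ n + 1 + 1)]
    have hsplit : ∑ s ∈ Finset.Icc 1 (n + 1), β2 ^ (n + 1 + 1 - s) * g s i ^ 2
        = β2 * ∑ s ∈ Finset.Icc 1 (n + 1), β2 ^ (n + 1 - s) * g s i ^ 2 := by
      rw [Finset.mul_sum]
      refine Finset.sum_congr rfl fun r hr => ?_
      rw [Finset.mem_Icc] at hr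
      rw [show n + 1 + 1 - r = (n + 1 - r) + 1 by omega, pow_succ]
      ring
    rw [hsplit]
    simp only [Nat.sub_self, pow_zero]
    ring
  -- second-moment bound on m in multiplied form
  have hmsq : ∀ t : ℕ, 1 ≤ t → t ≤ T → ∀ i,
      (1 - β2) * (β2 - β1 ^ 2) * m t i ^ 2 ≤ β2 * v t i := by
    intro t h1
    induction t, h1 using Nat.le_induction with
    | base =>
      intro hle i
      have hm1 : m 1 i = (1 - β1) * g 1 i := by
        rw [hm 1 le_rfl hle i]
        simp [hm0]
      have hv1 : v 1 i = (1 - β2) * g 1 i ^ 2 := by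
        rw [hv 1 le_rfl hle i]
        simp
      rw [hm1, hv1]
      have hA : (β2 - β1^2) * (1-β1)^2 ≤ β2 := by nlinarith [sq_nonneg β1]
      have hB := mul_le_mul_of_nonneg_left hA (mul_nonneg (by linarith : (0:ℝ) ≤ 1-β2) (sq_nonneg (g 1 i)))
      nlinarith [hB]
    | succ n hn ihn =>
      intro hle i
      have IH := ihn (by omega) i
      have hrec := hvrec (n + 1) (by omega) hle i
      rw [show (n + 1) - 1 = n by omega] at hrec
      rw [hm (n + 1) (by omega) hle i, show (n + 1) - 1 = n by omega, hrec]
      set b := β1 / Real.sqrt (n + 1 : ℕ) with hbdef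
      have hb1 : 0 < b := hbpos (n + 1) (by omega)
      have hb2 : b < 1 := hblt1 (n + 1) (by omega)
      have hb3 : b ≤ β1 := hble (n + 1) (by omega)
      set x := m n i
      set yy := g (n + 1) i
      clear_value b x yy
      have hvnn' : 0 ≤ v n i := hvnn n (by omega) (by omega) i
      have hβpos : 0 < β2 - β1^2 := by linarith
      have h1β2 : (0:ℝ) ≤ 1 - β2 := by linarith
      have hcross : 2*(β2-β1^2)*β1^2*((b*x)*((1-b)*yy)) ≤
          (β2-β1^2)^2*(b*x)^2 + β1^4*((1-b)*yy)^2 := by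
        nlinarith [sq_nonneg ((β2 - β1^2) * (b*x) - β1^2 * ((1-b)*yy))]
      have hA := mul_le_mul_of_nonneg_left hcross h1β2
      have hbb : b^2 ≤ β1^2 := by nlinarith
      have hbb2 : (1-b)^2 ≤ 1 := by nlinarith
      have hu : (b*x)^2 ≤ β1^2 * x^2 := by
        have := mul_le_mul_of_nonneg_right hbb (sq_nonneg x); linarith [this]
      have hv2 : ((1-b)*yy)^2 ≤ yy^2 := by
        have := mul_le_mul_of_nonneg_right hbb2 (sq_nonneg yy); linarith [this]
      have hB := mul_le_mul_of_nonneg_left hu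
        (by positivity : (0:ℝ) ≤ (1-β2)*(β2-β1^2)*β2)
      have hC := mul_le_mul_of_nonneg_left hv2
        (show (0:ℝ) ≤ (1-β2)*β1^2*β2 by positivity)
      have hE := mul_le_mul_of_nonneg_left IH (show (0:ℝ) ≤ β1^2*β2 by positivity)
      have hgoalmul : β1^2 * ((1 - β2) * (β2 - β1 ^ 2) * (b * x + (1 - b) * yy) ^ 2) ≤
          β1^2 * (β2 * (β2 * v n i + (1 - β2) * yy ^ 2)) := by
        linarith [hA, hB, hC, hE]
      have := (mul_le_mul_iff_right₀ (by positivity : (0:ℝ) < β1^2)).1 hgoalmul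
      linarith
  -- vhat facts
  have hvle_vhat : ∀ t, 1 ≤ t → t ≤ T → ∀ i, v t i ≤ vhat t i := by
    intro t h1 h2 i
    exact (hvhat t h1 h2 i).2 ⟨t, h1, le_rfl, rfl⟩
  have hvhatle : ∀ t, 1 ≤ t → t ≤ T → ∀ i, vhat t i ≤ G ^ 2 := by
    intro t h1 h2 i
    obtain ⟨s, hs1, hs2, hseq⟩ := (hvhat t h1 h2 i).1
    rw [hseq, hv s hs1 (le_trans hs2 h2) i]
    have hterm : ∀ r ∈ Finset.Icc 1 s, β2 ^ (s - r) * g r i ^ 2 ≤ β2 ^ (s - r) * G ^ 2 := by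
      intro r hr
      obtain ⟨hr1, hr2⟩ := Finset.mem_Icc.1 hr
      have hgr := hG r hr1 (le_trans (le_trans hr2 hs2) h2) i
      have hg2 : g r i ^ 2 ≤ G ^ 2 := by nlinarith [abs_nonneg (g r i), sq_abs (g r i)]
      exact mul_le_mul_of_nonneg_left hg2 (by positivity)
    have hsum := Finset.sum_le_sum hterm
    have hgeo := geom_aux β2 hβ2p.le s
    calc (1 - β2) * ∑ r ∈ Finset.Icc 1 s, β2 ^ (s - r) * g r i ^ 2
        ≤ (1 - β2) * ∑ r ∈ Finset.Icc 1 s, β2 ^ (s - r) * G ^ 2 :=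
          mul_le_mul_of_nonneg_left hsum (by linarith)
      _ = ((1 - β2) * ∑ r ∈ Finset.Icc 1 s, β2 ^ (s - r)) * G ^ 2 := by
          rw [← Finset.sum_mul]; ring
      _ ≤ 1 * G ^ 2 := mul_le_mul_of_nonneg_right hgeo (by positivity)
      _ = G ^ 2 := one_mul _
  have hsqvhat : ∀ t, 1 ≤ t → t ≤ T → ∀ i, Real.sqrt (vhat t i) ≤ G := by
    intro t h1 h2 i
    rw [show G = Real.sqrt (G ^ 2) by rw [Real.sqrt_sq hG0]]
    exact Real.sqrt_le_sqrt (hvhatle t h1 h2 i)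
  have hKpos : (0:ℝ) < β2 / ((1 - β2) * (β2 - β1 ^ 2)) :=
    div_pos hβ2p (mul_pos (by linarith) (by linarith))
  -- pointwise key bound
  have hpoint : ∀ t, 1 ≤ t → t ≤ T → ∀ i,
      g t i * (w t i - wstar i) ≤
        Real.sqrt (vhat t i) * (1 - ∏ s ∈ Finset.Icc 1 t, (β1 / Real.sqrt s)) /
            (2 * α t * (1 - β1 / Real.sqrt t)) *
          ((w t i - wstar i) ^ 2 - (w (t + 1) i - wstar i) ^ 2) +
        (α t / (1 - ∏ s ∈ Finset.Icc 1 t, (β1 / Real.sqrt s))) *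
            (G * (β2 / ((1 - β2) * (β2 - β1 ^ 2)))) / (2 * (1 - β1)) +
        (β1 / Real.sqrt t) * (G * D) / (1 - β1) := by
    intro t h1 h2 i
    have hst : 0 < Real.sqrt (vhat t i) := Real.sqrt_pos.2 (hvpos t h1 h2 i)
    have hst2 : Real.sqrt (vhat t i) ^ 2 = vhat t i := Real.sq_sqrt (hvpos t h1 h2 i).le
    have hsG := hsqvhat t h1 h2 i
    have hrt1 : 1 ≤ Real.sqrt (t:ℕ) := hsq1 t h1
    have hbt : 0 < β1 / Real.sqrt t := hbpos t h1
    have hbt1 : β1 / Real.sqrt t < 1 := hblt1 t h1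
    have hbtβ : β1 / Real.sqrt t ≤ β1 := hble t h1
    have hPp := hPpos t
    have hPl := hPle t h1
    have hαp := hα t h1 h2
    have hw := hupd t h1 h2 i
    have hmrec := hm t h1 h2 i
    have hmm' : |m (t - 1) i| ≤ G := hmG (t - 1) (by omega) i
    have hmv : m t i ^ 2 ≤ (β2 / ((1 - β2) * (β2 - β1 ^ 2))) * vhat t i := by
      have h5 := hmsq t h1 h2 i
      have h6 : β2 * v t i ≤ β2 * vhat t i :=
        mul_le_mul_of_nonneg_left (hvle_vhat t h1 h2 i) hβ2p.le
      rw [div_mul_eq_mul_div, le_div_iff₀ (mul_pos (by linarith : (0:ℝ) < 1 - β2)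
        (by linarith : (0:ℝ) < β2 - β1 ^ 2))]
      nlinarith [h5, h6]
    set P := ∏ s ∈ Finset.Icc 1 t, (β1 / Real.sqrt s) with hPdef
    set st := Real.sqrt (vhat t i) with hstdef
    set rt := Real.sqrt (t:ℕ) with hrtdef
    clear_value P st rt
    have hstG : st ≤ G := hsG
    have hrtne : rt ≠ 0 := by positivity
    have hstne : st ≠ 0 := ne_of_gt hst
    have hPne : (1:ℝ) - P ≠ 0 := by linarith
    have hbne : (1:ℝ) - β1 / rt ≠ 0 := by linarith
    have hrtβne : rt - β1 ≠ 0 := by nlinarith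
    have hαne : α t ≠ 0 := ne_of_gt hαp
    have hiden : g t i * (w t i - wstar i) =
        st * (1 - P) / (2 * α t * (1 - β1 / rt)) *
          ((w t i - wstar i) ^ 2 - (w (t + 1) i - wstar i) ^ 2) +
        (α t / (1 - P)) * m t i ^ 2 / (2 * (1 - β1 / rt) * st) -
        (β1 / rt) / (1 - β1 / rt) * (m (t - 1) i * (w t i - wstar i)) := by
      have hg' : g t i = (m t i - (β1 / rt) * m (t - 1) i) / (1 - β1 / rt) := by
        rw [eq_div_iff (by linarith : (1:ℝ) - β1 / rt ≠ 0)]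
        nlinarith [hmrec]
      rw [hw, hg']
      field_simp [hrtne, hstne, hPne, hrtβne, hαne]
      ring
    have ht1 : m t i ^ 2 / st ≤ G * (β2 / ((1 - β2) * (β2 - β1 ^ 2))) := by
      rw [div_le_iff₀ hst]
      nlinarith [hmv, hst2, mul_le_mul_of_nonneg_left hstG (mul_nonneg hKpos.le hst.le)]
    have hγp : 0 < α t / (1 - P) := div_pos hαp (by linarith)
    have htB : (α t / (1 - P)) * m t i ^ 2 / (2 * (1 - β1 / rt) * st) ≤
        (α t / (1 - P)) * (G * (β2 / ((1 - β2) * (β2 - β1 ^ 2)))) / (2 * (1 - β1)) := by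
      have heq1 : (α t / (1 - P)) * m t i ^ 2 / (2 * (1 - β1 / rt) * st) =
          ((α t / (1 - P)) / (2 * (1 - β1 / rt))) * (m t i ^ 2 / st) := by
        field_simp [hrtne, hstne, hPne, hrtβne]
      have heq2 : (α t / (1 - P)) * (G * (β2 / ((1 - β2) * (β2 - β1 ^ 2)))) / (2 * (1 - β1)) =
          ((α t / (1 - P)) / (2 * (1 - β1))) * (G * (β2 / ((1 - β2) * (β2 - β1 ^ 2)))) := by ring
      rw [heq1, heq2]
      have e1 : (α t / (1 - P)) / (2 * (1 - β1 / rt)) ≤ (α t / (1 - P)) / (2 * (1 - β1)) :=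
        div_le_div_of_nonneg_left hγp.le (by linarith) (by linarith)
      refine mul_le_mul e1 ht1 (by positivity) ?_
      positivity
    have habs : -(m (t - 1) i * (w t i - wstar i)) ≤ G * D := by
      have h7 := abs_mul (m (t - 1) i) (w t i - wstar i)
      have h8 : |m (t - 1) i| * |w t i - wstar i| ≤ G * D :=
        mul_le_mul hmm' (hD t h1 h2 i) (abs_nonneg _) hG0
      nlinarith [neg_abs_le (m (t - 1) i * (w t i - wstar i))]
    have htC : -((β1 / rt) / (1 - β1 / rt) * (m (t - 1) i * (w t i - wstar i))) ≤
        (β1 / rt) * (G * D) / (1 - β1) := by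
      have hc1 : (0:ℝ) ≤ (β1 / rt) / (1 - β1 / rt) := div_nonneg hbt.le (by linarith)
      have e3 : -((β1 / rt) / (1 - β1 / rt) * (m (t - 1) i * (w t i - wstar i))) =
          (β1 / rt) / (1 - β1 / rt) * (-(m (t - 1) i * (w t i - wstar i))) := by ring
      rw [e3]
      calc (β1 / rt) / (1 - β1 / rt) * (-(m (t - 1) i * (w t i - wstar i)))
          ≤ (β1 / rt) / (1 - β1 / rt) * (G * D) := mul_le_mul_of_nonneg_left habs hc1
        _ ≤ (β1 / rt) / (1 - β1) * (G * D) := by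
            apply mul_le_mul_of_nonneg_right _ (mul_nonneg hG0 hD0)
            exact div_le_div_of_nonneg_left hbt.le (by linarith) (by linarith)
        _ = (β1 / rt) * (G * D) / (1 - β1) := by ring
    linarith [hiden, htB, htC]
  -- step 1: convexity
  have step1 : ∑ t ∈ Finset.Icc 1 T, (ℓ t (w t) - ℓ t wstar) ≤
      ∑ t ∈ Finset.Icc 1 T, ∑ i, g t i * (w t i - wstar i) := by
    refine Finset.sum_le_sum fun t ht => ?_
    obtain ⟨ht1, ht2⟩ := Finset.mem_Icc.1 ht
    exact convex_grad_ineq (ℓ t) (w t) wstar (g t) (hconv t ht1 ht2) (hgrad t ht1 ht2)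
  -- step 2: split into three sums
  have step2 : ∑ t ∈ Finset.Icc 1 T, ∑ i, g t i * (w t i - wstar i) ≤
      (∑ t ∈ Finset.Icc 1 T, ∑ i : Fin d,
        Real.sqrt (vhat t i) * (1 - ∏ s ∈ Finset.Icc 1 t, (β1 / Real.sqrt s)) /
            (2 * α t * (1 - β1 / Real.sqrt t)) *
          ((w t i - wstar i) ^ 2 - (w (t + 1) i - wstar i) ^ 2)) +
      (∑ t ∈ Finset.Icc 1 T, ∑ _i : Fin d,
        (α t / (1 - ∏ s ∈ Finset.Icc 1 t, (β1 / Real.sqrt s))) *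
            (G * (β2 / ((1 - β2) * (β2 - β1 ^ 2)))) / (2 * (1 - β1))) +
      (∑ t ∈ Finset.Icc 1 T, ∑ _i : Fin d, (β1 / Real.sqrt t) * (G * D) / (1 - β1)) := by
    rw [← Finset.sum_add_distrib, ← Finset.sum_add_distrib]
    refine Finset.sum_le_sum fun t ht => ?_
    obtain ⟨ht1, ht2⟩ := Finset.mem_Icc.1 ht
    rw [← Finset.sum_add_distrib, ← Finset.sum_add_distrib]
    exact Finset.sum_le_sum fun i _ => hpoint t ht1 ht2 i
  -- term 1 : telescoping via abel_bound
  have hterm1 : (∑ t ∈ Finset.Icc 1 T, ∑ i : Fin d,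
      Real.sqrt (vhat t i) * (1 - ∏ s ∈ Finset.Icc 1 t, (β1 / Real.sqrt s)) /
          (2 * α t * (1 - β1 / Real.sqrt t)) *
        ((w t i - wstar i) ^ 2 - (w (t + 1) i - wstar i) ^ 2)) ≤
      d * (G * D ^ 2 / (2 * α T * (1 - β1))) := by
    rw [Finset.sum_comm]
    have hper : ∀ i : Fin d, (∑ t ∈ Finset.Icc 1 T,
        Real.sqrt (vhat t i) * (1 - ∏ s ∈ Finset.Icc 1 t, (β1 / Real.sqrt s)) /
            (2 * α t * (1 - β1 / Real.sqrt t)) *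
          ((w t i - wstar i) ^ 2 - (w (t + 1) i - wstar i) ^ 2)) ≤
        G * D ^ 2 / (2 * α T * (1 - β1)) := by
      intro i
      have hy0' : ∀ t, 1 ≤ t → t ≤ T → (0:ℝ) ≤
          Real.sqrt (vhat t i) * (1 - ∏ s ∈ Finset.Icc 1 t, (β1 / Real.sqrt s)) /
            (2 * α t * (1 - β1 / Real.sqrt t)) := by
        intro t h1 h2
        apply div_nonneg (mul_nonneg (Real.sqrt_nonneg _) (by linarith [hPle t h1]))
        have h9 := hblt1 t h1
        have h10 := hα t h1 h2
        nlinarith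
      have hyz' : ∀ t, 1 ≤ t → t ≤ T →
          Real.sqrt (vhat t i) * (1 - ∏ s ∈ Finset.Icc 1 t, (β1 / Real.sqrt s)) /
            (2 * α t * (1 - β1 / Real.sqrt t)) ≤
          Real.sqrt (vhat t i) * (1 - ∏ s ∈ Finset.Icc 1 t, (β1 / Real.sqrt s)) /
            (2 * α t * (1 - β1)) := by
        intro t h1 h2
        have hαp := hα t h1 h2
        apply div_le_div_of_nonneg_left
          (mul_nonneg (Real.sqrt_nonneg _) (by linarith [hPle t h1]))
          (by positivity)
        have := hble t h1
        nlinarith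
      have ha0' : ∀ t, 1 ≤ t → t ≤ T + 1 → (0:ℝ) ≤ (w t i - wstar i) ^ 2 :=
        fun t _ _ => sq_nonneg _
      have haD' : ∀ t, 1 ≤ t → t ≤ T → (w t i - wstar i) ^ 2 ≤ D ^ 2 := by
        intro t h1 h2
        have := hD t h1 h2 i
        nlinarith [abs_nonneg (w t i - wstar i), sq_abs (w t i - wstar i)]
      have humono : ∀ t : ℕ, 2 ≤ t → t ≤ T →
          Real.sqrt (vhat (t-1) i) * (1 - ∏ s ∈ Finset.Icc 1 (t-1), (β1 / Real.sqrt s)) / (2 * α (t-1)) ≤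
          Real.sqrt (vhat t i) * (1 - ∏ s ∈ Finset.Icc 1 t, (β1 / Real.sqrt s)) / (2 * α t) := by
        intro t h2t hle
        have e1 : ∀ τ : ℕ, 1 ≤ τ → τ ≤ T →
            Real.sqrt (vhat τ i) * (1 - ∏ s ∈ Finset.Icc 1 τ, (β1 / Real.sqrt s)) / (2 * α τ) =
            (Real.sqrt (vhat τ i) / α τ) * ((1 - ∏ s ∈ Finset.Icc 1 τ, (β1 / Real.sqrt s)) / 2) := by
          intro τ hτ1 hτ2
          rw [div_mul_div_comm, mul_comm (α τ) 2]
        rw [e1 (t-1) (by omega) (by omega), e1 t (by omega) hle]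
        apply mul_le_mul (hvmono i (t-1) t (by omega) (by omega) hle)
        · apply div_le_div_of_nonneg_right (by linarith [hPanti t h2t]) (by norm_num)
        · apply div_nonneg (by linarith [hPle (t-1) (by omega : 1 ≤ t - 1)]) (by norm_num)
        · exact div_nonneg (Real.sqrt_nonneg _) (hα t (by omega) hle).le
      have hz' : ∀ t : ℕ, 2 ≤ t → t ≤ T →
          Real.sqrt (vhat (t-1) i) * (1 - ∏ s ∈ Finset.Icc 1 (t-1), (β1 / Real.sqrt s)) /
            (2 * α (t-1) * (1 - β1)) ≤
          Real.sqrt (vhat t i) * (1 - ∏ s ∈ Finset.Icc 1 t, (β1 / Real.sqrt s)) /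
            (2 * α t * (1 - β1)) := by
        intro t h2t hle
        have e2 : ∀ τ : ℕ,
            Real.sqrt (vhat τ i) * (1 - ∏ s ∈ Finset.Icc 1 τ, (β1 / Real.sqrt s)) /
              (2 * α τ * (1 - β1)) =
            (Real.sqrt (vhat τ i) * (1 - ∏ s ∈ Finset.Icc 1 τ, (β1 / Real.sqrt s)) / (2 * α τ)) *
              (1 / (1 - β1)) := by
          intro τ
          rcases eq_or_ne (α τ) 0 with h | h
          · rw [h]; simp
          · field_simp
        rw [e2 (t-1), e2 t]
        exact mul_le_mul_of_nonneg_right (humono t h2t hle) (by positivity)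
      have hinc' : ∀ t : ℕ, 2 ≤ t → t ≤ T →
          Real.sqrt (vhat t i) * (1 - ∏ s ∈ Finset.Icc 1 t, (β1 / Real.sqrt s)) /
              (2 * α t * (1 - β1 / Real.sqrt t)) -
            Real.sqrt (vhat (t-1) i) * (1 - ∏ s ∈ Finset.Icc 1 (t-1), (β1 / Real.sqrt s)) /
              (2 * α (t-1) * (1 - β1 / Real.sqrt ((t-1 : ℕ) : ℝ))) ≤
          Real.sqrt (vhat t i) * (1 - ∏ s ∈ Finset.Icc 1 t, (β1 / Real.sqrt s)) /
              (2 * α t * (1 - β1)) -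
            Real.sqrt (vhat (t-1) i) * (1 - ∏ s ∈ Finset.Icc 1 (t-1), (β1 / Real.sqrt s)) /
              (2 * α (t-1) * (1 - β1)) := by
        intro t h2t hle
        have hb_t : 0 < β1 / Real.sqrt t := hbpos t (by omega)
        have hb_t1 : 0 < β1 / Real.sqrt ((t-1 : ℕ) : ℝ) := hbpos (t-1) (by omega)
        have hbl_t : β1 / Real.sqrt t < 1 := hblt1 t (by omega)
        have hbl_t1 : β1 / Real.sqrt ((t-1 : ℕ) : ℝ) < 1 :=
          lt_of_le_of_lt (hble (t-1) (by omega)) hβ1l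
        have hbb := hbanti t h2t
        have hu1 : (0:ℝ) ≤
            Real.sqrt (vhat (t-1) i) * (1 - ∏ s ∈ Finset.Icc 1 (t-1), (β1 / Real.sqrt s)) /
              (2 * α (t-1)) := by
          apply div_nonneg (mul_nonneg (Real.sqrt_nonneg _)
            (by linarith [hPle (t-1) (by omega : 1 ≤ t-1)]))
          have := hα (t-1) (by omega) (by omega)
          positivity
        have hum := humono t h2t hle
        have hc1 : 1 / (1 - β1 / Real.sqrt ((t:ℕ):ℝ)) ≤ 1 / (1 - β1 / Real.sqrt ((t-1 : ℕ) : ℝ)) :=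
          one_div_le_one_div_of_le (by linarith) (by linarith)
        have hc2 : 1 / (1 - β1 / Real.sqrt ((t:ℕ):ℝ)) ≤ 1 / (1 - β1) :=
          one_div_le_one_div_of_le h1β (by linarith [hble t (by omega : 1 ≤ t)])
        have hcpos : 0 < 1 / (1 - β1 / Real.sqrt ((t:ℕ):ℝ)) := by
          apply one_div_pos.2; linarith
        have e3 : ∀ τ : ℕ, ∀ c : ℝ,
            Real.sqrt (vhat τ i) * (1 - ∏ s ∈ Finset.Icc 1 τ, (β1 / Real.sqrt s)) /
              (2 * α τ * c) =
            (Real.sqrt (vhat τ i) * (1 - ∏ s ∈ Finset.Icc 1 τ, (β1 / Real.sqrt s)) / (2 * α τ)) *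
              (1 / c) := by
          intro τ c
          rcases eq_or_ne (α τ) 0 with h | h
          · rw [h]; simp
          · rcases eq_or_ne c 0 with hc | hc
            · rw [hc]; simp
            · field_simp
        rw [e3 t (1 - β1 / Real.sqrt ((t:ℕ):ℝ)), e3 (t-1) (1 - β1 / Real.sqrt ((t-1:ℕ):ℝ)),
          e3 t (1 - β1), e3 (t-1) (1 - β1)]
        have hA := mul_le_mul_of_nonneg_left hc1 hu1
        have hB := mul_le_mul_of_nonneg_right hc2 (sub_nonneg.2 hum)
        nlinarith [hA, hB]
      have hAB := abel_bound T hT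
        (fun t => Real.sqrt (vhat t i) * (1 - ∏ s ∈ Finset.Icc 1 t, (β1 / Real.sqrt s)) /
            (2 * α t * (1 - β1 / Real.sqrt t)))
        (fun t => Real.sqrt (vhat t i) * (1 - ∏ s ∈ Finset.Icc 1 t, (β1 / Real.sqrt s)) /
            (2 * α t * (1 - β1)))
        (fun t => (w t i - wstar i) ^ 2) (D ^ 2) hy0' hyz' ha0' haD' hinc' hz'
      have hzT : Real.sqrt (vhat T i) * (1 - ∏ s ∈ Finset.Icc 1 T, (β1 / Real.sqrt s)) /
          (2 * α T * (1 - β1)) * D ^ 2 ≤ G * D ^ 2 / (2 * α T * (1 - β1)) := by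
        have hnum : Real.sqrt (vhat T i) * (1 - ∏ s ∈ Finset.Icc 1 T, (β1 / Real.sqrt s)) ≤ G := by
          calc Real.sqrt (vhat T i) * (1 - ∏ s ∈ Finset.Icc 1 T, (β1 / Real.sqrt s)) ≤ G * 1 :=
              mul_le_mul (hsqvhat T hT le_rfl i) (by linarith [hPpos T]) (by linarith [hPle T hT])
                hG0
            _ = G := mul_one G
        have hden : (0:ℝ) < 2 * α T * (1 - β1) := by
          have := hα T hT le_rfl; positivity
        calc Real.sqrt (vhat T i) * (1 - ∏ s ∈ Finset.Icc 1 T, (β1 / Real.sqrt s)) /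
              (2 * α T * (1 - β1)) * D ^ 2
            ≤ G / (2 * α T * (1 - β1)) * D ^ 2 := by
              apply mul_le_mul_of_nonneg_right _ (sq_nonneg D)
              exact (div_le_div_iff_of_pos_right hden).2 hnum
          _ = G * D ^ 2 / (2 * α T * (1 - β1)) := by ring
      have hyTnn : (0:ℝ) ≤ Real.sqrt (vhat T i) * (1 - ∏ s ∈ Finset.Icc 1 T, (β1 / Real.sqrt s)) /
          (2 * α T * (1 - β1 / Real.sqrt T)) * (w (T+1) i - wstar i) ^ 2 :=
        mul_nonneg (hy0' T hT le_rfl) (sq_nonneg _)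
      linarith [hAB, hzT, hyTnn]
    calc ∑ i : Fin d, (∑ t ∈ Finset.Icc 1 T,
        Real.sqrt (vhat t i) * (1 - ∏ s ∈ Finset.Icc 1 t, (β1 / Real.sqrt s)) /
            (2 * α t * (1 - β1 / Real.sqrt t)) *
          ((w t i - wstar i) ^ 2 - (w (t + 1) i - wstar i) ^ 2))
        ≤ ∑ _i : Fin d, G * D ^ 2 / (2 * α T * (1 - β1)) :=
          Finset.sum_le_sum fun i _ => hper i
      _ = d * (G * D ^ 2 / (2 * α T * (1 - β1))) := by
          rw [Finset.sum_const, Finset.card_univ, Fintype.card_fin, nsmul_eq_mul]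
  -- term 2 : exact value
  have hterm2 : (∑ t ∈ Finset.Icc 1 T, ∑ _i : Fin d,
      (α t / (1 - ∏ s ∈ Finset.Icc 1 t, (β1 / Real.sqrt s))) *
          (G * (β2 / ((1 - β2) * (β2 - β1 ^ 2)))) / (2 * (1 - β1))) =
      (∑ t ∈ Finset.Icc 1 T, α t / (1 - ∏ s ∈ Finset.Icc 1 t, (β1 / Real.sqrt s))) *
        (d * G * (β2 / ((1 - β2) * (β2 - β1 ^ 2))) / (2 * (1 - β1))) := by
    rw [Finset.sum_mul]
    refine Finset.sum_congr rfl fun t ht => ?_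
    rw [Finset.sum_const, Finset.card_univ, Fintype.card_fin, nsmul_eq_mul]
    ring
  -- term 3
  have hterm3 : (∑ t ∈ Finset.Icc 1 T, ∑ _i : Fin d, (β1 / Real.sqrt t) * (G * D) / (1 - β1)) ≤
      2 * d * D * G * β1 * Real.sqrt T / (1 - β1) := by
    have heq : (∑ t ∈ Finset.Icc 1 T, ∑ _i : Fin d, (β1 / Real.sqrt t) * (G * D) / (1 - β1)) =
        (d * G * D * β1 / (1 - β1)) * ∑ t ∈ Finset.Icc 1 T, 1 / Real.sqrt t := by
      rw [Finset.mul_sum]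
      refine Finset.sum_congr rfl fun t ht => ?_
      rw [Finset.sum_const, Finset.card_univ, Fintype.card_fin, nsmul_eq_mul]
      ring
    rw [heq]
    have hco : (0:ℝ) ≤ d * G * D * β1 / (1 - β1) := by positivity
    calc (d * G * D * β1 / (1 - β1)) * ∑ t ∈ Finset.Icc 1 T, 1 / Real.sqrt t
        ≤ (d * G * D * β1 / (1 - β1)) * (2 * Real.sqrt T) :=
          mul_le_mul_of_nonneg_left (sum_inv_sqrt_le T) hco
      _ = 2 * d * D * G * β1 * Real.sqrt T / (1 - β1) := by ring
  have hfin : (d:ℝ) * (G * D ^ 2 / (2 * α T * (1 - β1))) =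
      d * D ^ 2 * G / (2 * α T * (1 - β1)) := by ring
  linarith [step1, step2, hterm1, hterm2, hterm3, hfin]
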